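/- Let $q$ be a prime power and $S \subseteq [m] \times [n]$ a set containing no elements in row $m$. Then for any $r \geq 1$, the number $N_m(r)$ of $m \times n$ matrices over $\mathbf{F}_q$ of rank $r$ whose support avoids $S$ satisfies $N_m(r) = N_{m-1}(r) \cdot q^r + N_{m-1}(r-1) \cdot (q^n - q^{r-1})$, where $N_{m-1}(s)$ is the number of $(m-1) \times n$ matrices of rank $s$ over $\mathbf{F}_q$ whose support avoids $S$ (restricted to the first $m-1$ rows). -/

import Mathlib

open Module Submodule

private lemma range_snoc_aux {m : ℕ} {α : Type*} (f : Fin m → α) (a : α) :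
    Set.range (Fin.snoc f a : Fin (m + 1) → α) = insert a (Set.range f) := by
  ext x
  simp only [Set.mem_range, Set.mem_insert_iff]
  constructor
  · rintro ⟨i, rfl⟩
    rcases eq_or_ne i (Fin.last m) with h | h
    · subst h; left; simp
    · obtain ⟨j, rfl⟩ := Fin.exists_castSucc_eq.mpr h
      right; exact ⟨j, by simp⟩
  · rintro (rfl | ⟨j, rfl⟩)
    · exact ⟨Fin.last m, by simp⟩
    · exact ⟨j.castSucc, by simp⟩

private lemma finrank_span_insert_aux {K V : Type*} [Field K] [AddCommGroup V] [Module K V]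
    [FiniteDimensional K V] (s : Set V) (v : V) (hv : v ∉ span K s) :
    finrank K (span K (insert v s)) = finrank K (span K s) + 1 := by
  have hv0 : v ≠ 0 := fun h => hv (h ▸ (span K s).zero_mem)
  have hd : Disjoint (span K s) (K ∙ v) := (disjoint_span_singleton' hv0).mpr hv
  have h := Submodule.finrank_sup_add_finrank_inf_eq (span K s) (K ∙ v)
  rw [hd.eq_bot, finrank_bot, finrank_span_singleton hv0] at h
  rw [span_insert, sup_comm]
  omega

private lemma rank_snoc_mem {F : Type*} [Field F] {m n : ℕ}
    (B : Matrix (Fin m) (Fin n) F) (v : Fin n → F)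
    (hv : v ∈ span F (Set.range B)) :
    Matrix.rank (Fin.snoc B v : Matrix (Fin (m + 1)) (Fin n) F) = B.rank := by
  rw [Matrix.rank_eq_finrank_span_row (Fin.snoc B v : Matrix (Fin (m + 1)) (Fin n) F),
    Matrix.rank_eq_finrank_span_row B]
  unfold Matrix.row
  rw [show Set.range (Fin.snoc B v : Fin (m + 1) → (Fin n → F)) = insert v (Set.range B) from
      range_snoc_aux _ _, span_insert_eq_span hv]

private lemma rank_snoc_not_mem {F : Type*} [Field F] {m n : ℕ}
    (B : Matrix (Fin m) (Fin n) F) (v : Fin n → F)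
    (hv : v ∉ span F (Set.range B)) :
    Matrix.rank (Fin.snoc B v : Matrix (Fin (m + 1)) (Fin n) F) = B.rank + 1 := by
  rw [Matrix.rank_eq_finrank_span_row (Fin.snoc B v : Matrix (Fin (m + 1)) (Fin n) F),
    Matrix.rank_eq_finrank_span_row B]
  unfold Matrix.row
  rw [show Set.range (Fin.snoc B v : Fin (m + 1) → (Fin n → F)) = insert v (Set.range B) from
      range_snoc_aux _ _]
  exact finrank_span_insert_aux _ _ hv

private lemma card_prod_aux {α β : Type*} [Fintype α] [Fintype β] (p : α → Prop)
    (Q : α → β → Prop) [DecidablePred p] [∀ a, DecidablePred (Q a)] (c : ℕ)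
    (h : ∀ a, p a → Fintype.card {b // Q a b} = c) :
    Fintype.card {x : α × β // p x.1 ∧ Q x.1 x.2} = Fintype.card {a // p a} * c := by
  classical
  calc Fintype.card {x : α × β // p x.1 ∧ Q x.1 x.2}
      = Fintype.card (Σ a : α, {b // p a ∧ Q a b}) :=
        Fintype.card_congr (Equiv.subtypeProdEquivSigmaSubtype fun a b => p a ∧ Q a b)
    _ = ∑ a : α, Fintype.card {b // p a ∧ Q a b} := Fintype.card_sigma
    _ = ∑ a : α, (if p a then c else 0) := by
        refine Finset.sum_congr rfl fun a _ => ?_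
        by_cases hp : p a
        · rw [if_pos hp, ← h a hp]
          exact Fintype.card_congr (Equiv.subtypeEquivRight fun b => and_iff_right hp)
        · rw [if_neg hp]
          exact Fintype.card_eq_zero_iff.mpr ⟨fun x => hp x.2.1⟩
    _ = Fintype.card {a // p a} * c := by
        rw [← Finset.sum_filter, Finset.sum_const, smul_eq_mul, Fintype.card_subtype]

theorem stmt_19 (q m n r : ℕ) (hr : 1 ≤ r)
    (F : Type*) [Field F] [Fintype F] (hq : Fintype.card F = q)
    (S : Finset (Fin (m + 1) × Fin n))
    (hS : ∀ p ∈ S, p.1 ≠ Fin.last m) :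
    Nat.card {A : Matrix (Fin (m + 1)) (Fin n) F //
        A.rank = r ∧ ∀ p ∈ S, A p.1 p.2 = 0} =
    Nat.card {A : Matrix (Fin m) (Fin n) F //
        A.rank = r ∧ ∀ p ∈ S, ∀ i : Fin m, Fin.castSucc i = p.1 → A i p.2 = 0}
      * q ^ r +
    Nat.card {A : Matrix (Fin m) (Fin n) F //
        A.rank = r - 1 ∧ ∀ p ∈ S, ∀ i : Fin m, Fin.castSucc i = p.1 → A i p.2 = 0}
      * (q ^ n - q ^ (r - 1)) := by
  classical
  subst hq
  set avoidB : Matrix (Fin m) (Fin n) F → Prop :=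
    fun B => ∀ p ∈ S, ∀ i : Fin m, Fin.castSucc i = p.1 → B i p.2 = 0 with havoidB
  set W : Matrix (Fin m) (Fin n) F → Submodule F (Fin n → F) :=
    fun B => span F (Set.range B) with hW
  rw [Nat.card_eq_fintype_card, Nat.card_eq_fintype_card, Nat.card_eq_fintype_card]
  -- the snoc equivalence
  let e0 : Matrix (Fin m) (Fin n) F × (Fin n → F) ≃ Matrix (Fin (m + 1)) (Fin n) F :=
    { toFun := fun x => (Fin.snoc x.1 x.2 : Matrix (Fin (m + 1)) (Fin n) F)
      invFun := fun A => (Matrix.of (Fin.init A), A (Fin.last m))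
      left_inv := fun x => by
        obtain ⟨B, v⟩ := x
        refine Prod.ext ?_ ?_
        · funext i j
          simp [Fin.init, Fin.snoc]
        · simp [Fin.snoc]
      right_inv := fun A => Fin.snoc_init_self A }
  have hiff : ∀ x : Matrix (Fin m) (Fin n) F × (Fin n → F),
      (((x.1.rank = r ∧ avoidB x.1) ∧ x.2 ∈ W x.1) ∨
       ((x.1.rank = r - 1 ∧ avoidB x.1) ∧ x.2 ∉ W x.1)) ↔
      (Matrix.rank (Fin.snoc x.1 x.2 : Matrix (Fin (m + 1)) (Fin n) F) = r ∧
        ∀ p ∈ S, (Fin.snoc x.1 x.2 : Matrix (Fin (m + 1)) (Fin n) F) p.1 p.2 = 0) := by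
    rintro ⟨B, v⟩
    have havoid : (∀ p ∈ S, (Fin.snoc B v : Matrix (Fin (m + 1)) (Fin n) F) p.1 p.2 = 0) ↔
        avoidB B := by
      constructor
      · intro h p hp i hi
        have h2 := h p hp
        rw [← hi] at h2; simp [Fin.snoc] at h2
        exact h2
      · intro h p hp
        obtain ⟨i, hi⟩ := Fin.exists_castSucc_eq.mpr (hS p hp)
        rw [← hi]; simp only [Fin.snoc, Fin.coe_castSucc, Fin.is_lt, dite_true, Fin.castLT_castSucc, cast_eq]
        exact h p hp i hi
    simp only
    rw [havoid]
    by_cases hv : v ∈ W B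
    · rw [rank_snoc_mem B v hv]
      constructor
      · rintro (⟨⟨h1, h2⟩, _⟩ | ⟨_, h3⟩)
        · exact ⟨h1, h2⟩
        · exact absurd hv h3
      · rintro ⟨h1, h2⟩; exact Or.inl ⟨⟨h1, h2⟩, hv⟩
    · rw [rank_snoc_not_mem B v hv]
      constructor
      · rintro (⟨_, h3⟩ | ⟨⟨h1, h2⟩, _⟩)
        · exact absurd h3 hv
        · exact ⟨by omega, h2⟩
      · rintro ⟨h1, h2⟩; exact Or.inr ⟨⟨by omega, h2⟩, hv⟩
  have hcard0 : Fintype.card {A : Matrix (Fin (m + 1)) (Fin n) F //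
        A.rank = r ∧ ∀ p ∈ S, A p.1 p.2 = 0} =
      Fintype.card {x : Matrix (Fin m) (Fin n) F × (Fin n → F) //
        ((x.1.rank = r ∧ avoidB x.1) ∧ x.2 ∈ W x.1) ∨
        ((x.1.rank = r - 1 ∧ avoidB x.1) ∧ x.2 ∉ W x.1)} :=
    (Fintype.card_congr (Equiv.subtypeEquiv e0 hiff)).symm
  have hdisj : Disjoint
      (fun x : Matrix (Fin m) (Fin n) F × (Fin n → F) =>
        (x.1.rank = r ∧ avoidB x.1) ∧ x.2 ∈ W x.1)
      (fun x : Matrix (Fin m) (Fin n) F × (Fin n → F) =>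
        (x.1.rank = r - 1 ∧ avoidB x.1) ∧ x.2 ∉ W x.1) := by
    rw [disjoint_iff_inf_le]
    intro x hx
    exact (hx.2.2 hx.1.2).elim
  have hsplit : Fintype.card {x : Matrix (Fin m) (Fin n) F × (Fin n → F) //
        ((x.1.rank = r ∧ avoidB x.1) ∧ x.2 ∈ W x.1) ∨
        ((x.1.rank = r - 1 ∧ avoidB x.1) ∧ x.2 ∉ W x.1)} =
      Fintype.card {x : Matrix (Fin m) (Fin n) F × (Fin n → F) //
        (x.1.rank = r ∧ avoidB x.1) ∧ x.2 ∈ W x.1} +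
      Fintype.card {x : Matrix (Fin m) (Fin n) F × (Fin n → F) //
        (x.1.rank = r - 1 ∧ avoidB x.1) ∧ x.2 ∉ W x.1} :=
    Fintype.card_subtype_or_disjoint _ _ hdisj
  have hfib1 : ∀ B : Matrix (Fin m) (Fin n) F, (B.rank = r ∧ avoidB B) →
      Fintype.card {v : Fin n → F // v ∈ W B} = Fintype.card F ^ r := by
    rintro B ⟨hB, -⟩
    have h1 : finrank F (W B) = r := by
      rw [hW]; rw [Matrix.rank_eq_finrank_span_row] at hB; exact hB
    calc Fintype.card {v : Fin n → F // v ∈ W B}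
        = Fintype.card F ^ finrank F (W B) := card_eq_pow_finrank
      _ = Fintype.card F ^ r := by rw [h1]
  have hfib2 : ∀ B : Matrix (Fin m) (Fin n) F, (B.rank = r - 1 ∧ avoidB B) →
      Fintype.card {v : Fin n → F // v ∉ W B} =
        Fintype.card F ^ n - Fintype.card F ^ (r - 1) := by
    rintro B ⟨hB, -⟩
    have h1 : finrank F (W B) = r - 1 := by
      rw [hW]; rw [Matrix.rank_eq_finrank_span_row] at hB; exact hB
    have h2 : Fintype.card {v : Fin n → F // v ∈ W B} = Fintype.card F ^ (r - 1) := by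
      calc Fintype.card {v : Fin n → F // v ∈ W B}
          = Fintype.card F ^ finrank F (W B) := card_eq_pow_finrank
        _ = Fintype.card F ^ (r - 1) := by rw [h1]
    calc Fintype.card {v : Fin n → F // v ∉ W B}
        = Fintype.card (Fin n → F) - Fintype.card {v : Fin n → F // v ∈ W B} :=
          Fintype.card_subtype_compl _
      _ = Fintype.card F ^ n - Fintype.card F ^ (r - 1) := by
          rw [h2]; congr 1; simp [Fintype.card_fun]
  have h1 : Fintype.card {x : Matrix (Fin m) (Fin n) F × (Fin n → F) //
        (x.1.rank = r ∧ avoidB x.1) ∧ x.2 ∈ W x.1} =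
      Fintype.card {B : Matrix (Fin m) (Fin n) F // B.rank = r ∧ avoidB B} *
        Fintype.card F ^ r :=
    card_prod_aux (fun B => B.rank = r ∧ avoidB B) (fun B v => v ∈ W B) _ hfib1
  have h2 : Fintype.card {x : Matrix (Fin m) (Fin n) F × (Fin n → F) //
        (x.1.rank = r - 1 ∧ avoidB x.1) ∧ x.2 ∉ W x.1} =
      Fintype.card {B : Matrix (Fin m) (Fin n) F // B.rank = r - 1 ∧ avoidB B} *
        (Fintype.card F ^ n - Fintype.card F ^ (r - 1)) :=
    card_prod_aux (fun B => B.rank = r - 1 ∧ avoidB B) (fun B v => v ∉ W B) _ hfib2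
  rw [hcard0, hsplit, h1, h2]
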